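/- Let A be a commutative ring, B a commutative A-algebra, (I_ρ)_{ρ∈ℕ} an ideal semifiltration of A, x, y ∈ B, and m, n ∈ ℕ. If x is m-integral over (A, (I_ρ)) and y is n-integral over (A, (I_ρ)), then x + y is (n·m)-integral over (A, (I_ρ)). -/

import Mathlib

lemma aux_step {R T : Type*} [CommRing R] [CommRing T] [Algebra R T]
    (x : T) (m : ℕ) (b : ℕ → R)
    (hb : x ^ m = ∑ i ∈ Finset.range m, algebraMap R T (b i) * x ^ i) :
    ∃ Mx : Matrix (Fin m) (Fin m) R,
      ∀ i : Fin m, x * x ^ (i : ℕ) = ∑ w : Fin m, algebraMap R T (Mx i w) * x ^ (w : ℕ) := by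
  refine ⟨fun i w => if (i : ℕ) + 1 = m then b w else if (w : ℕ) = (i : ℕ) + 1 then 1 else 0, ?_⟩
  intro i
  have hpow : x * x ^ (i : ℕ) = x ^ ((i : ℕ) + 1) := (pow_succ' x (i : ℕ)).symm
  by_cases h : (i : ℕ) + 1 = m
  · rw [hpow, h, hb, ← Fin.sum_univ_eq_sum_range]
    exact Finset.sum_congr rfl fun w _ => by simp [h]
  · have hlt : (i : ℕ) + 1 < m := lt_of_le_of_ne (Nat.succ_le_of_lt i.2) h
    have hterm : ∀ w : Fin m,
        algebraMap R T (if (i : ℕ) + 1 = m then b w else if (w : ℕ) = (i : ℕ) + 1 then 1 else 0)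
          * x ^ (w : ℕ)
        = if w = (⟨(i : ℕ) + 1, hlt⟩ : Fin m) then x ^ ((i : ℕ) + 1) else 0 := by
      intro w
      by_cases hw : w = (⟨(i : ℕ) + 1, hlt⟩ : Fin m)
      · subst hw; simp [h]
      · have hw' : ¬ ((w : ℕ) = (i : ℕ) + 1) := fun hc => hw (Fin.ext hc)
        simp [h, hw, hw']
    rw [hpow, Finset.sum_congr rfl fun w _ => hterm w, Finset.sum_ite_eq' Finset.univ]
    simp
lemma aux_key {R T : Type*} [CommRing R] [CommRing T] [Algebra R T] [Nontrivial R]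
    (x y : T) (m n : ℕ) (hm : 0 < m) (hn : 0 < n) (bx bY : ℕ → R)
    (hbx : x ^ m = ∑ i ∈ Finset.range m, algebraMap R T (bx i) * x ^ i)
    (hby : y ^ n = ∑ i ∈ Finset.range n, algebraMap R T (bY i) * y ^ i) :
    ∃ c : ℕ → R, c (n * m) = 1 ∧
      (∑ k ∈ Finset.range (n * m + 1), algebraMap R T (c k) * (x + y) ^ k = 0) := by
  obtain ⟨Mx, hMx⟩ := aux_step x m bx hbx
  obtain ⟨My, hMy⟩ := aux_step y n bY hby
  let F : Fin n × Fin m → T := fun v => y ^ (v.1 : ℕ) * x ^ (v.2 : ℕ)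
  let MX : Matrix (Fin n × Fin m) (Fin n × Fin m) R := fun v w => if w.1 = v.1 then Mx v.2 w.2 else 0
  let MY : Matrix (Fin n × Fin m) (Fin n × Fin m) R := fun v w => if w.2 = v.2 then My v.1 w.1 else 0
  have hX : ∀ v, x * F v = ∑ w, algebraMap R T (MX v w) * F w := by
    intro v
    have h1 : x * F v = ∑ w2 : Fin m, algebraMap R T (Mx v.2 w2) * (y ^ (v.1 : ℕ) * x ^ (w2 : ℕ)) := by
      calc x * F v = y ^ (v.1 : ℕ) * (x * x ^ (v.2 : ℕ)) := by show _ = _ * _; ring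
        _ = y ^ (v.1 : ℕ) * ∑ w2 : Fin m, algebraMap R T (Mx v.2 w2) * x ^ (w2 : ℕ) := by
            rw [hMx v.2]
        _ = _ := by rw [Finset.mul_sum]; exact Finset.sum_congr rfl fun w2 _ => by ring
    have hterm : ∀ w1 : Fin n,
        (∑ w2 : Fin m, algebraMap R T (MX v (w1, w2)) * F (w1, w2))
        = if w1 = v.1 then
            ∑ w2 : Fin m, algebraMap R T (Mx v.2 w2) * (y ^ (v.1 : ℕ) * x ^ (w2 : ℕ)) else 0 := by
      intro w1
      by_cases hw : w1 = v.1
      · subst hw; simp [MX, F]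
      · simp [MX, hw]
    rw [h1, Fintype.sum_prod_type]
    simp_rw [hterm]
    rw [Finset.sum_ite_eq' Finset.univ]
    simp
  have hY : ∀ v, y * F v = ∑ w, algebraMap R T (MY v w) * F w := by
    intro v
    have h1 : y * F v = ∑ w1 : Fin n, algebraMap R T (My v.1 w1) * (y ^ (w1 : ℕ) * x ^ (v.2 : ℕ)) := by
      calc y * F v = (y * y ^ (v.1 : ℕ)) * x ^ (v.2 : ℕ) := by show _ = _; ring
        _ = (∑ w1 : Fin n, algebraMap R T (My v.1 w1) * y ^ (w1 : ℕ)) * x ^ (v.2 : ℕ) := by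
            rw [hMy v.1]
        _ = _ := by rw [Finset.sum_mul]; exact Finset.sum_congr rfl fun w1 _ => by ring
    have hterm : ∀ w1 : Fin n,
        (∑ w2 : Fin m, algebraMap R T (MY v (w1, w2)) * F (w1, w2))
        = algebraMap R T (My v.1 w1) * (y ^ (w1 : ℕ) * x ^ (v.2 : ℕ)) := by
      intro w1
      have : ∀ w2 : Fin m, algebraMap R T (MY v (w1, w2)) * F (w1, w2)
          = if w2 = v.2 then algebraMap R T (My v.1 w1) * (y ^ (w1 : ℕ) * x ^ (v.2 : ℕ)) else 0 := by
        intro w2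
        by_cases hw : w2 = v.2
        · subst hw; simp [MY, F]
        · simp [MY, hw]
      rw [Finset.sum_congr rfl fun w2 _ => this w2, Finset.sum_ite_eq' Finset.univ]
      simp
    rw [h1, Fintype.sum_prod_type]
    exact (Finset.sum_congr rfl fun w1 _ => hterm w1).symm ▸ rfl
  set M := MX + MY with hMdef
  have hM : ∀ v, (x + y) * F v = ∑ w, algebraMap R T (M v w) * F w := by
    intro v
    rw [add_mul, hX v, hY v, ← Finset.sum_add_distrib]
    refine Finset.sum_congr rfl fun w _ => ?_
    rw [hMdef]
    simp [Matrix.add_apply, map_add, add_mul]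
  have hpow : ∀ (k : ℕ) (v), (x + y) ^ k * F v
      = ∑ w, algebraMap R T ((M ^ k) v w) * F w := by
    intro k
    induction k with
    | zero =>
      intro v
      simp only [pow_zero, one_mul, Matrix.one_apply, apply_ite (algebraMap R T),
        map_one, map_zero, ite_mul, one_mul, zero_mul]
      rw [Finset.sum_ite_eq Finset.univ]
      simp
    | succ k ih =>
      intro v
      have h0 : (x + y) ^ (k + 1) * F v = (x + y) ^ k * ((x + y) * F v) := by ring
      rw [h0, hM v, Finset.mul_sum]
      have h1 : ∀ w, (x + y) ^ k * (algebraMap R T (M v w) * F w)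
          = algebraMap R T (M v w) * ((x + y) ^ k * F w) := fun w => by ring
      simp_rw [h1, ih, Finset.mul_sum]
      rw [Finset.sum_comm]
      refine Finset.sum_congr rfl fun u _ => ?_
      have h2 : (M ^ (k + 1)) v u = ∑ w, M v w * (M ^ k) w u := by
        rw [pow_succ']
        rfl
      rw [h2, map_sum, Finset.sum_mul]
      refine Finset.sum_congr rfl fun w _ => ?_
      rw [map_mul]
      ring
  have hdeg : M.charpoly.natDegree = n * m := by
    rw [Matrix.charpoly_natDegree_eq_dim]
    simp
  refine ⟨fun k => M.charpoly.coeff k, ?_, ?_⟩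
  · rw [← hdeg]
    exact M.charpoly_monic.coeff_natDegree
  · have hF0 : F (⟨0, hn⟩, ⟨0, hm⟩) = 1 := by simp [F]
    have h3 : (∑ k ∈ Finset.range (n * m + 1), algebraMap R T (M.charpoly.coeff k) * (x + y) ^ k)
        = ∑ k ∈ Finset.range (n * m + 1),
            algebraMap R T (M.charpoly.coeff k) * ((x + y) ^ k * F (⟨0, hn⟩, ⟨0, hm⟩)) := by
      rw [hF0]; simp
    rw [h3]
    simp_rw [hpow, Finset.mul_sum]
    rw [Finset.sum_comm]
    have hz : ∀ w, (∑ k ∈ Finset.range (n * m + 1),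
        algebraMap R T (M.charpoly.coeff k)
          * (algebraMap R T ((M ^ k) (⟨0, hn⟩, ⟨0, hm⟩) w) * F w)) = 0 := by
      intro w
      have h4 : ∀ k, algebraMap R T (M.charpoly.coeff k)
          * (algebraMap R T ((M ^ k) (⟨0, hn⟩, ⟨0, hm⟩) w) * F w)
          = algebraMap R T (M.charpoly.coeff k * (M ^ k) (⟨0, hn⟩, ⟨0, hm⟩) w) * F w :=
        fun k => by rw [map_mul]; ring
      simp_rw [h4]
      rw [← Finset.sum_mul, ← map_sum]
      have h5 : (∑ k ∈ Finset.range (n * m + 1),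
          M.charpoly.coeff k * (M ^ k) (⟨0, hn⟩, ⟨0, hm⟩) w)
          = (Polynomial.aeval M M.charpoly) (⟨0, hn⟩, ⟨0, hm⟩) w := by
        rw [Polynomial.aeval_eq_sum_range' (by omega : M.charpoly.natDegree < n * m + 1)]
        rw [Matrix.sum_apply]
        exact Finset.sum_congr rfl fun k _ => by simp [Matrix.smul_apply, smul_eq_mul]
      rw [h5, Matrix.aeval_self_charpoly]
      simp
    rw [Finset.sum_congr rfl fun w _ => hz w]
    simp

theorem stmt15 {A B : Type*} [CommRing A] [CommRing B] [Algebra A B] (I : ℕ → Ideal A)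
    (hI0 : I 0 = ⊤) (hImul : ∀ a b : ℕ, I a * I b ≤ I (a + b)) (x y : B) (m n : ℕ)
    (hx : ∃ a : ℕ → A, (∑ k ∈ Finset.range (m + 1), algebraMap A B (a k) * x ^ k = 0) ∧
      a m = 1 ∧ ∀ i ≤ m, a i ∈ I (m - i))
    (hy : ∃ a : ℕ → A, (∑ k ∈ Finset.range (n + 1), algebraMap A B (a k) * y ^ k = 0) ∧
      a n = 1 ∧ ∀ i ≤ n, a i ∈ I (n - i)) :
    ∃ a : ℕ → A, (∑ k ∈ Finset.range (n * m + 1), algebraMap A B (a k) * (x + y) ^ k = 0) ∧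
      a (n * m) = 1 ∧ ∀ i ≤ n * m, a i ∈ I (n * m - i) := by
  by_cases hB : (1 : B) = 0
  · haveI : Subsingleton B := subsingleton_of_zero_eq_one hB.symm
    refine ⟨fun k => if k = n * m then 1 else 0, Subsingleton.elim _ _, by simp, ?_⟩
    intro i hi
    by_cases h : i = n * m
    · subst h
      simp [Nat.sub_self, hI0]
    · simp [h]
  · obtain ⟨ax, hx1, hx2, hx3⟩ := hx
    obtain ⟨ay, hy1, hy2, hy3⟩ := hy
    have hm : 0 < m := by
      rcases Nat.eq_zero_or_pos m with h | h
      · exfalso; subst h; simp [hx2] at hx1; exact hB hx1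
      · exact h
    have hn : 0 < n := by
      rcases Nat.eq_zero_or_pos n with h | h
      · exfalso; subst h; simp [hy2] at hy1; exact hB hy1
      · exact h
    have hA : (1 : A) ≠ 0 := fun h => hB (by rw [← map_one (algebraMap A B), h, map_zero])
    haveI : Nontrivial A := ⟨⟨1, 0, hA⟩⟩
    -- the Rees-type subalgebra
    let S : Subalgebra A (Polynomial A) :=
      { carrier := {p : Polynomial A | ∀ k, p.coeff k ∈ I k}
        mul_mem' := by
          intro p q hp hq k
          rw [Polynomial.coeff_mul]
          refine Ideal.sum_mem _ fun c hc => ?_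
          have hck : c.1 + c.2 = k := Finset.HasAntidiagonal.mem_antidiagonal.mp hc
          exact hck ▸ hImul c.1 c.2 (Ideal.mul_mem_mul (hp c.1) (hq c.2))
        one_mem' := by
          intro k
          rcases Nat.eq_zero_or_pos k with h | h
          · subst h; rw [hI0]; trivial
          · rw [Polynomial.coeff_one, if_neg (by omega)]; exact Ideal.zero_mem _
        add_mem' := fun hp hq k => by
          rw [Polynomial.coeff_add]; exact Ideal.add_mem _ (hp k) (hq k)
        zero_mem' := fun k => by simp
        algebraMap_mem' := by
          intro a k
          rcases Nat.eq_zero_or_pos k with h | h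
          · subst h; rw [hI0]; trivial
          · show (Polynomial.C a).coeff k ∈ I k
            rw [Polynomial.coeff_C, if_neg (by omega)]
            exact Ideal.zero_mem _ }
    haveI : Nontrivial S :=
      ⟨⟨0, 1, fun h => zero_ne_one (α := Polynomial A) (congrArg Subtype.val h)⟩⟩
    letI : Algebra S (Polynomial B) :=
      ((Polynomial.mapRingHom (algebraMap A B)).comp (Subalgebra.val S).toRingHom).toAlgebra
    have halg : ∀ s : S, algebraMap S (Polynomial B) s
        = Polynomial.map (algebraMap A B) (s : Polynomial A) := fun s => rfl
    have memS : ∀ p : Polynomial A, (∀ k, p.coeff k ∈ I k) → p ∈ S := fun _ h => h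
    -- turn the integrality hypotheses into "power = lower sum" form
    have hxm : x ^ m = ∑ i ∈ Finset.range m, algebraMap A B (-(ax i)) * x ^ i := by
      have h := hx1
      rw [Finset.sum_range_succ, hx2, map_one, one_mul] at h
      rw [eq_neg_of_add_eq_zero_right h, ← Finset.sum_neg_distrib]
      exact Finset.sum_congr rfl fun i _ => by rw [map_neg, neg_mul]
    have hym : y ^ n = ∑ i ∈ Finset.range n, algebraMap A B (-(ay i)) * y ^ i := by
      have h := hy1
      rw [Finset.sum_range_succ, hy2, map_one, one_mul] at h
      rw [eq_neg_of_add_eq_zero_right h, ← Finset.sum_neg_distrib]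
      exact Finset.sum_congr rfl fun i _ => by rw [map_neg, neg_mul]
    -- lift elements to S
    have hmemb : ∀ (az : ℕ → A) (mm : ℕ), (∀ i ≤ mm, az i ∈ I (mm - i)) →
        ∀ i, (Polynomial.C (-(az i)) * Polynomial.X ^ (mm - i)) ∈ S := by
      intro az mm haz i
      refine memS _ fun k => ?_
      rw [Polynomial.coeff_C_mul, Polynomial.coeff_X_pow]
      by_cases hk : k = mm - i
      · rw [hk, if_pos rfl, mul_one]
        rcases le_or_gt i mm with h | h
        · exact neg_mem (haz i h)
        · rw [Nat.sub_eq_zero_of_le h.le, hI0]; trivial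
      · rw [if_neg hk, mul_zero]
        exact Ideal.zero_mem _
    have hlift : ∀ (z : B) (mm : ℕ) (az : ℕ → A),
        (z ^ mm = ∑ i ∈ Finset.range mm, algebraMap A B (az i) * z ^ i) →
        (Polynomial.C z * Polynomial.X) ^ mm
          = ∑ i ∈ Finset.range mm, Polynomial.map (algebraMap A B)
              (Polynomial.C (az i) * Polynomial.X ^ (mm - i))
            * (Polynomial.C z * Polynomial.X) ^ i := by
      intro z mm az hz
      have hterm : ∀ i ∈ Finset.range mm,
          Polynomial.map (algebraMap A B) (Polynomial.C (az i) * Polynomial.X ^ (mm - i))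
            * (Polynomial.C z * Polynomial.X) ^ i
          = Polynomial.C (algebraMap A B (az i) * z ^ i) * Polynomial.X ^ mm := by
        intro i hi
        rw [Finset.mem_range] at hi
        have hXX : (Polynomial.X : Polynomial B) ^ (mm - i) * Polynomial.X ^ i
            = Polynomial.X ^ mm := by rw [← pow_add, Nat.sub_add_cancel hi.le]
        rw [Polynomial.map_mul, Polynomial.map_C, Polynomial.map_pow, Polynomial.map_X,
          mul_pow, ← Polynomial.C_pow, Polynomial.C_mul, ← hXX]
        ring
      calc (Polynomial.C z * Polynomial.X) ^ mm
          = Polynomial.C (z ^ mm) * Polynomial.X ^ mm := by rw [mul_pow, Polynomial.C_pow]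
        _ = Polynomial.C (∑ i ∈ Finset.range mm, algebraMap A B (az i) * z ^ i)
              * Polynomial.X ^ mm := by rw [← hz]
        _ = ∑ i ∈ Finset.range mm,
              Polynomial.C (algebraMap A B (az i) * z ^ i) * Polynomial.X ^ mm := by
            rw [map_sum, Finset.sum_mul]
        _ = _ := (Finset.sum_congr rfl hterm).symm
    let bx : ℕ → S := fun i => ⟨_, hmemb ax m hx3 i⟩
    let bY : ℕ → S := fun i => ⟨_, hmemb ay n hy3 i⟩
    have hbx : (Polynomial.C x * Polynomial.X) ^ m
        = ∑ i ∈ Finset.range m, algebraMap S (Polynomial B) (bx i)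
            * (Polynomial.C x * Polynomial.X) ^ i := by
      rw [hlift x m (fun i => -(ax i)) hxm]
      exact Finset.sum_congr rfl fun i _ => by rw [halg]
    have hbY : (Polynomial.C y * Polynomial.X) ^ n
        = ∑ i ∈ Finset.range n, algebraMap S (Polynomial B) (bY i)
            * (Polynomial.C y * Polynomial.X) ^ i := by
      rw [hlift y n (fun i => -(ay i)) hym]
      exact Finset.sum_congr rfl fun i _ => by rw [halg]
    obtain ⟨c, hc1, hc2⟩ := aux_key (Polynomial.C x * Polynomial.X)
      (Polynomial.C y * Polynomial.X) m n hm hn bx bY hbx hbY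
    refine ⟨fun k => ((c k : Polynomial A)).coeff (n * m - k), ?_, ?_, ?_⟩
    · -- take the coefficient of X^(n*m) in hc2
      have hsum := congrArg (fun p => Polynomial.coeff p (n * m)) hc2
      simp only [Polynomial.finset_sum_coeff, Polynomial.coeff_zero] at hsum
      rw [← hsum]
      refine Finset.sum_congr rfl fun k hk => ?_
      rw [Finset.mem_range] at hk
      have hk' : k ≤ n * m := by omega
      rw [halg]
      have hXY : Polynomial.C x * Polynomial.X + Polynomial.C y * Polynomial.X
          = Polynomial.C (x + y) * Polynomial.X := by rw [Polynomial.C_add]; ring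
      rw [hXY, mul_pow, ← Polynomial.C_pow, ← mul_assoc, Polynomial.coeff_mul_X_pow',
        if_pos hk', Polynomial.coeff_mul_C, Polynomial.coeff_map]
    · show ((c (n * m) : Polynomial A)).coeff (n * m - n * m) = 1
      rw [hc1, Nat.sub_self]
      show ((1 : S) : Polynomial A).coeff 0 = 1
      rw [Subalgebra.coe_one, Polynomial.coeff_one]
      simp
    · intro i hi
      exact (c i).2 (n * m - i)
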